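/- arXiv:2001.11533 — 6 statements merged into one kernel-verified Lean document; each statement's English description precedes it below -/
import Mathlib

section
/- Let X and Y be positive definite, invertible continuous linear operators on a real Hilbert space H, with continuous inverses X⁻¹ and Y⁻¹. If c ≥ 0 is such that for every u ∈ H with u ≠ 0 one has |Real.log ⟪X u, u⟫ − Real.log ⟪Y u, u⟫| ≤ c, then for every u ≠ 0 one also has |Real.log ⟪X⁻¹ u, u⟫ − Real.log ⟪Y⁻¹ u, u⟫| ≤ c. (This is the pointwise form of the identity d_σ(X, Y) = d_σ(X⁻¹, Y⁻¹) for the spectral distance.) -/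
open scoped RealInnerProductSpace

private lemma key_var {H : Type*} [NormedAddCommGroup H] [InnerProductSpace ℝ H]
    [CompleteSpace H]
    (A Ainv : H →L[ℝ] H) (hsa : IsSelfAdjoint A)
    (hpos : ∀ w : H, 0 ≤ ⟪A w, w⟫)
    (h1 : A.comp Ainv = 1)
    (u v : H) : 2 * ⟪u, v⟫ - ⟪A v, v⟫ ≤ ⟪Ainv u, u⟫ := by
  have hAinv : A (Ainv u) = u := by
    have := ContinuousLinearMap.ext_iff.mp h1 u
    simpa using this
  have hadj : ∀ x y : H, ⟪A x, y⟫ = ⟪x, A y⟫ := by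
    intro x y
    conv_lhs => rw [← hsa.adjoint_eq]
    exact ContinuousLinearMap.adjoint_inner_left A y x
  have h := hpos (v - Ainv u)
  have hexp : ⟪A (v - Ainv u), v - Ainv u⟫
      = ⟪A v, v⟫ - 2 * ⟪u, v⟫ + ⟪Ainv u, u⟫ := by
    rw [map_sub, inner_sub_left, inner_sub_right, inner_sub_right, hAinv]
    have h1' : ⟪A v, Ainv u⟫ = ⟪v, u⟫ := by rw [hadj, hAinv]
    have h2' : ⟪u, Ainv u⟫ = ⟪Ainv u, u⟫ := real_inner_comm _ _
    have h3' : ⟪v, u⟫ = ⟪u, v⟫ := real_inner_comm _ _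
    rw [h1', h2', h3']
    ring
  linarith [hexp ▸ h]

private lemma key_eq {H : Type*} [NormedAddCommGroup H] [InnerProductSpace ℝ H]
    (A Ainv : H →L[ℝ] H) (h1 : A.comp Ainv = 1)
    (u : H) : ⟪Ainv u, u⟫ = 2 * ⟪u, Ainv u⟫ - ⟪A (Ainv u), Ainv u⟫ := by
  have hAinv : A (Ainv u) = u := by
    have := ContinuousLinearMap.ext_iff.mp h1 u
    simpa using this
  rw [hAinv, real_inner_comm u (Ainv u)]
  ring

/-- If `⟪Xv,v⟫ ≤ K⟪Yv,v⟫` for all `v` with `K > 0`, then `⟪Y⁻¹u,u⟫ ≤ K⟪X⁻¹u,u⟫`. -/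
private lemma inv_antitone {H : Type*} [NormedAddCommGroup H] [InnerProductSpace ℝ H]
    [CompleteSpace H]
    (X Y Xinv Yinv : H →L[ℝ] H)
    (hXsa : IsSelfAdjoint X)
    (hXpos : ∀ w : H, 0 ≤ ⟪X w, w⟫)
    (hX1 : X.comp Xinv = 1) (hY1 : Y.comp Yinv = 1)
    (K : ℝ) (hK : 0 < K)
    (h : ∀ v : H, ⟪X v, v⟫ ≤ K * ⟪Y v, v⟫)
    (u : H) : ⟪Yinv u, u⟫ ≤ K * ⟪Xinv u, u⟫ := by
  set v := Yinv u with hv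
  have h0 : ⟪Yinv u, u⟫ = 2 * ⟪u, v⟫ - ⟪Y v, v⟫ := key_eq Y Yinv hY1 u
  have hYX : ⟪Y v, v⟫ ≥ (1 / K) * ⟪X v, v⟫ := by
    have hv' := h v
    rw [ge_iff_le, div_mul_eq_mul_div, one_mul, div_le_iff₀ hK]
    nlinarith
  set w := (1 / K) • v with hw
  have hkey : 2 * ⟪u, w⟫ - ⟪X w, w⟫ ≤ ⟪Xinv u, u⟫ :=
    key_var X Xinv hXsa hXpos hX1 u w
  have hew : ⟪u, w⟫ = (1 / K) * ⟪u, v⟫ := by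
    rw [hw, real_inner_smul_right]
  have hXw : ⟪X w, w⟫ = (1 / K) * ((1 / K) * ⟪X v, v⟫) := by
    rw [hw, map_smul, real_inner_smul_left, real_inner_smul_right]
  have hK0 : K ≠ 0 := ne_of_gt hK
  calc ⟪Yinv u, u⟫ = 2 * ⟪u, v⟫ - ⟪Y v, v⟫ := h0
    _ ≤ 2 * ⟪u, v⟫ - (1 / K) * ⟪X v, v⟫ := by linarith
    _ = K * (2 * ⟪u, w⟫ - ⟪X w, w⟫) := by
        rw [hew, hXw]; field_simp
    _ ≤ K * ⟪Xinv u, u⟫ := by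
        exact mul_le_mul_of_nonneg_left hkey (le_of_lt hK)

/-- Spectral distance bounds are preserved under taking inverses:
pointwise form of `d_σ(X, Y) = d_σ(X⁻¹, Y⁻¹)` (one inequality direction,
which by symmetry of the roles gives the identity). -/
theorem spectral_distance_inv
    {H : Type*} [NormedAddCommGroup H] [InnerProductSpace ℝ H] [CompleteSpace H]
    (X Y Xinv Yinv : H →L[ℝ] H)
    (hXsa : IsSelfAdjoint X) (hXpos : ∀ u : H, u ≠ 0 → 0 < ⟪X u, u⟫)
    (hYsa : IsSelfAdjoint Y) (hYpos : ∀ u : H, u ≠ 0 → 0 < ⟪Y u, u⟫)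
    (hX1 : X.comp Xinv = 1) (hX2 : Xinv.comp X = 1)
    (hY1 : Y.comp Yinv = 1) (hY2 : Yinv.comp Y = 1)
    (c : ℝ) (hc : 0 ≤ c)
    (hd : ∀ u : H, u ≠ 0 → |Real.log ⟪X u, u⟫ - Real.log ⟪Y u, u⟫| ≤ c) :
    ∀ u : H, u ≠ 0 → |Real.log ⟪Xinv u, u⟫ - Real.log ⟪Yinv u, u⟫| ≤ c := by
  have hXpos' : ∀ w : H, 0 ≤ ⟪X w, w⟫ := by
    intro w
    rcases eq_or_ne w 0 with rfl | hw
    · simp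
    · exact le_of_lt (hXpos w hw)
  have hYpos' : ∀ w : H, 0 ≤ ⟪Y w, w⟫ := by
    intro w
    rcases eq_or_ne w 0 with rfl | hw
    · simp
    · exact le_of_lt (hYpos w hw)
  have hec : (0:ℝ) < Real.exp c := Real.exp_pos c
  -- pointwise two-sided quadratic form bounds
  have hXY : ∀ v : H, ⟪X v, v⟫ ≤ Real.exp c * ⟪Y v, v⟫ := by
    intro v
    rcases eq_or_ne v 0 with rfl | hv
    · simp
    · have h := (abs_le.mp (hd v hv)).2
      have hx := hXpos v hv; have hy := hYpos v hv
      have : Real.log ⟪X v, v⟫ ≤ c + Real.log ⟪Y v, v⟫ := by linarith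
      have := Real.exp_le_exp.mpr this
      rwa [Real.exp_log hx, Real.exp_add, Real.exp_log hy] at this
  have hYX : ∀ v : H, ⟪Y v, v⟫ ≤ Real.exp c * ⟪X v, v⟫ := by
    intro v
    rcases eq_or_ne v 0 with rfl | hv
    · simp
    · have h := (abs_le.mp (hd v hv)).1
      have hx := hXpos v hv; have hy := hYpos v hv
      have : Real.log ⟪Y v, v⟫ ≤ c + Real.log ⟪X v, v⟫ := by linarith
      have := Real.exp_le_exp.mpr this
      rwa [Real.exp_log hy, Real.exp_add, Real.exp_log hx] at this
  intro u hu
  -- positivity of inverse forms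
  have hXiu : Xinv u ≠ 0 := by
    intro h0
    apply hu
    have := ContinuousLinearMap.ext_iff.mp hX1 u
    simp only [ContinuousLinearMap.comp_apply, h0, map_zero] at this
    simpa using this.symm
  have hYiu : Yinv u ≠ 0 := by
    intro h0
    apply hu
    have := ContinuousLinearMap.ext_iff.mp hY1 u
    simp only [ContinuousLinearMap.comp_apply, h0, map_zero] at this
    simpa using this.symm
  have hXipos : 0 < ⟪Xinv u, u⟫ := by
    have hAu : X (Xinv u) = u := by
      have := ContinuousLinearMap.ext_iff.mp hX1 u; simpa using this
    have := hXpos (Xinv u) hXiu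
    rw [hAu] at this
    rwa [real_inner_comm]
  have hYipos : 0 < ⟪Yinv u, u⟫ := by
    have hAu : Y (Yinv u) = u := by
      have := ContinuousLinearMap.ext_iff.mp hY1 u; simpa using this
    have := hYpos (Yinv u) hYiu
    rw [hAu] at this
    rwa [real_inner_comm]
  -- two-sided bounds on inverse forms
  have h1 : ⟪Yinv u, u⟫ ≤ Real.exp c * ⟪Xinv u, u⟫ :=
    inv_antitone X Y Xinv Yinv hXsa hXpos' hX1 hY1 _ hec hXY u
  have h2 : ⟪Xinv u, u⟫ ≤ Real.exp c * ⟪Yinv u, u⟫ :=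
    inv_antitone Y X Yinv Xinv hYsa hYpos' hY1 hX1 _ hec hYX u
  rw [abs_le]
  constructor
  · have := Real.log_le_log hYipos h1
    rw [Real.log_mul (ne_of_gt hec) (ne_of_gt hXipos), Real.log_exp] at this
    linarith
  · have := Real.log_le_log hXipos h2
    rw [Real.log_mul (ne_of_gt hec) (ne_of_gt hYipos), Real.log_exp] at this
    linarith
end

section
/- Let G and X be positive definite continuous linear operators on a real Hilbert space H, with G invertible with continuous inverse G⁻¹. Suppose c < 0.4 is such that for every u ≠ 0, |Real.log ⟪X u, u⟫ − Real.log ⟪G⁻¹ u, u⟫| ≤ c. Then the Newton iterate N := 2 • X − X ∘ G ∘ X is positive definite, and for every u ≠ 0, |Real.log ⟪N u, u⟫ − Real.log ⟪G⁻¹ u, u⟫| ≤ 2 c². -/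
open scoped RealInnerProductSpace

lemma key_ineq {c : ℝ} (h0 : 0 ≤ c) (h1 : c ≤ 0.4) :
    Real.exp (-(2 * c ^ 2)) + (Real.exp c - 1) ^ 2 ≤ 1 := by
  have hc1 : c ≤ 1 := by linarith
  have hE : Real.exp c ≤ 1 + c + c ^ 2 / 2 + c ^ 3 / 6 + 5 / 96 * c ^ 4 := by
    have h := Real.exp_bound' h0 hc1 (n := 4) (by norm_num)
    norm_num [Finset.sum_range_succ, Nat.factorial] at h
    linarith
  have hE1 : 1 + c ≤ Real.exp c := by linarith [Real.add_one_le_exp c]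
  have ht0 : (0 : ℝ) ≤ 2 * c ^ 2 := by positivity
  have ht1 : |(-(2 * c ^ 2))| ≤ 1 := by rw [abs_neg, abs_of_nonneg ht0]; nlinarith
  have h3 := Real.exp_bound ht1 (n := 3) (by norm_num)
  have hEn : Real.exp (-(2 * c ^ 2)) ≤ 1 - 2 * c ^ 2 + 2 * c ^ 4 + 16 / 9 * c ^ 6 := by
    norm_num [Finset.sum_range_succ, Nat.factorial, abs_le, abs_of_nonneg ht0] at h3
    nlinarith [h3.2]
  have hsq : (Real.exp c - 1) ^ 2 ≤ (c + c ^ 2 / 2 + c ^ 3 / 6 + 5 / 96 * c ^ 4) ^ 2 := by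
    have ha : (0 : ℝ) ≤ Real.exp c - 1 := by linarith
    have hb : Real.exp c - 1 ≤ c + c ^ 2 / 2 + c ^ 3 / 6 + 5 / 96 * c ^ 4 := by linarith
    exact pow_le_pow_left₀ ha hb 2
  nlinarith [hEn, hsq, sq_nonneg c, sq_nonneg (c - 0.4), mul_nonneg h0 h0,
    mul_nonneg (mul_nonneg h0 h0) h0, sq_nonneg (c * c), h0, h1,
    mul_nonneg (mul_nonneg (mul_nonneg h0 h0) h0) h0,
    mul_nonneg h0 (sub_nonneg.mpr h1), mul_nonneg (mul_nonneg h0 h0) (sub_nonneg.mpr h1),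
    mul_nonneg (mul_nonneg (mul_nonneg h0 h0) h0) (sub_nonneg.mpr h1),
    mul_nonneg (mul_nonneg (mul_nonneg (mul_nonneg h0 h0) h0) h0) (sub_nonneg.mpr h1)]

/-- Quadratic error reduction of the Newton iterate `N(X) = 2X - XGX` for the
equation `X⁻¹ - G = 0`: pointwise form of
`d_σ(N(X), G⁻¹) ≤ 2 d_σ(X, G⁻¹)²` when `d_σ(X, G⁻¹) < 0.4`. -/
theorem spectral_distance_newton
    {H : Type*} [NormedAddCommGroup H] [InnerProductSpace ℝ H] [CompleteSpace H]
    (G Ginv X : H →L[ℝ] H)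
    (hGsa : IsSelfAdjoint G) (hGpos : ∀ u : H, u ≠ 0 → 0 < ⟪G u, u⟫)
    (hXsa : IsSelfAdjoint X) (hXpos : ∀ u : H, u ≠ 0 → 0 < ⟪X u, u⟫)
    (hG1 : G.comp Ginv = 1) (hG2 : Ginv.comp G = 1)
    (c : ℝ) (hc : c < 0.4)
    (hd : ∀ u : H, u ≠ 0 → |Real.log ⟪X u, u⟫ - Real.log ⟪Ginv u, u⟫| ≤ c)
    (N : H →L[ℝ] H) (hN : N = (2 : ℝ) • X - X.comp (G.comp X)) :
    (IsSelfAdjoint N ∧ ∀ u : H, u ≠ 0 → 0 < ⟪N u, u⟫) ∧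
      ∀ u : H, u ≠ 0 → |Real.log ⟪N u, u⟫ - Real.log ⟪Ginv u, u⟫| ≤ 2 * c ^ 2 := by
  have hXsym : ∀ x y : H, ⟪X x, y⟫ = ⟪x, X y⟫ :=
    ContinuousLinearMap.isSelfAdjoint_iff_isSymmetric.mp hXsa
  have hGsym : ∀ x y : H, ⟪G x, y⟫ = ⟪x, G y⟫ :=
    ContinuousLinearMap.isSelfAdjoint_iff_isSymmetric.mp hGsa
  have hGG : ∀ w : H, G (Ginv w) = w := fun w => by
    have := congrArg (fun T : H →L[ℝ] H => T w) hG1; simpa using this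
  have hGG' : ∀ w : H, Ginv (G w) = w := fun w => by
    have := congrArg (fun T : H →L[ℝ] H => T w) hG2; simpa using this
  have hGinvsym : ∀ x y : H, ⟪Ginv x, y⟫ = ⟪x, Ginv y⟫ := by
    intro x y
    calc ⟪Ginv x, y⟫ = ⟪Ginv x, G (Ginv y)⟫ := by rw [hGG]
    _ = ⟪G (Ginv x), Ginv y⟫ := (hGsym _ _).symm
    _ = ⟪x, Ginv y⟫ := by rw [hGG]
  have hGinvpos : ∀ u : H, u ≠ 0 → 0 < ⟪Ginv u, u⟫ := by
    intro u hu
    have h1 : Ginv u ≠ 0 := by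
      intro h; exact hu (by rw [← hGG u, h, map_zero])
    have h2 := hGpos (Ginv u) h1
    rw [hGG u] at h2
    rwa [real_inner_comm]
  have hGnonneg : ∀ w : H, 0 ≤ ⟪G w, w⟫ := by
    intro w; by_cases hw : w = 0
    · simp [hw]
    · exact (hGpos w hw).le
  -- self-adjointness of N
  have hNsa : IsSelfAdjoint N := by
    have h3 : X.comp (G.comp X) = X * G * X := (mul_assoc X G X).symm
    rw [hN, h3]
    have hXGX : IsSelfAdjoint (X * G * X) := by
      rw [IsSelfAdjoint, star_mul, star_mul, hXsa.star_eq, hGsa.star_eq, mul_assoc]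
    have h2X : IsSelfAdjoint ((2 : ℝ) • X) := by
      rw [IsSelfAdjoint, star_smul, star_trivial, hXsa.star_eq]
    exact h2X.sub hXGX
  -- Newton quadratic-form identity
  have hNform : ∀ u : H,
      ⟪N u, u⟫ = ⟪Ginv u, u⟫ - ⟪G (X u - Ginv u), X u - Ginv u⟫ := by
    intro u
    have h1 : N u = (2 : ℝ) • X u - X (G (X u)) := by rw [hN]; rfl
    have h2 : ⟪X (G (X u)), u⟫ = ⟪G (X u), X u⟫ := hXsym _ _
    have h4 : ⟪G (X u), Ginv u⟫ = ⟪X u, u⟫ := by rw [hGsym, hGG]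
    have h5 : ⟪u, X u⟫ = ⟪X u, u⟫ := real_inner_comm _ _
    have h6 : ⟪u, Ginv u⟫ = ⟪Ginv u, u⟫ := real_inner_comm _ _
    simp only [h1, map_sub, inner_sub_left, inner_sub_right, real_inner_smul_left, hGG]
    linarith [h2, h4, h5, h6]
  -- main bounds
  have hkey : ∀ u : H, u ≠ 0 →
      Real.exp (-(2 * c ^ 2)) * ⟪Ginv u, u⟫ ≤ ⟪N u, u⟫ ∧ ⟪N u, u⟫ ≤ ⟪Ginv u, u⟫ := by
    intro u hu
    have hc0 : 0 ≤ c := le_trans (abs_nonneg _) (hd u hu)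
    set m : ℝ := Real.exp c - 1 with hm
    have hm0 : 0 ≤ m := by
      have := Real.add_one_le_exp c; simp only [hm]; linarith
    have hform' : ∀ w : H, |⟪X w - Ginv w, w⟫| ≤ m * ⟪Ginv w, w⟫ := by
      intro w
      rw [inner_sub_left]
      by_cases hw : w = 0
      · simp [hw]
      · have ga := hGinvpos w hw
        have xa := hXpos w hw
        obtain ⟨hl, hr⟩ := abs_le.mp (hd w hw)
        have h1 : ⟪X w, w⟫ ≤ Real.exp c * ⟪Ginv w, w⟫ := by
          have hlog : Real.log ⟪X w, w⟫ ≤ Real.log (Real.exp c * ⟪Ginv w, w⟫) := by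
            rw [Real.log_mul (Real.exp_ne_zero c) (ne_of_gt ga), Real.log_exp]
            linarith
          exact (Real.log_le_log_iff xa (by positivity)).mp hlog
        have h2 : Real.exp (-c) * ⟪Ginv w, w⟫ ≤ ⟪X w, w⟫ := by
          have hlog : Real.log (Real.exp (-c) * ⟪Ginv w, w⟫) ≤ Real.log ⟪X w, w⟫ := by
            rw [Real.log_mul (Real.exp_ne_zero _) (ne_of_gt ga), Real.log_exp]
            linarith
          exact (Real.log_le_log_iff (by positivity) xa).mp hlog
        have hsum : (2 : ℝ) ≤ Real.exp (-c) + Real.exp c := by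
          have a1 := Real.add_one_le_exp c
          have a2 := Real.add_one_le_exp (-c)
          linarith
        rw [abs_le]
        constructor
        · nlinarith [h2, ga.le, hsum]
        · nlinarith [h1, ga.le]
    -- symmetry of D := X - Ginv form
    have hDsym : ∀ x y : H, ⟪X x - Ginv x, y⟫ = ⟪X y - Ginv y, x⟫ := by
      intro x y
      rw [inner_sub_left, inner_sub_left, hXsym, hGinvsym,
        real_inner_comm x (X y), real_inner_comm x (Ginv y)]
    -- polarization identity
    have hpol_id : ∀ p q : H,
        ⟪X (p + q) - Ginv (p + q), p + q⟫ - ⟪X (p - q) - Ginv (p - q), p - q⟫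
          = 4 * ⟪X p - Ginv p, q⟫ := by
      intro p q
      have hsym := hDsym q p
      simp only [map_add, map_sub, inner_sub_left, inner_add_left, inner_sub_right,
        inner_add_right] at hsym ⊢
      linarith [hXsym p q, hXsym q p, hGinvsym p q, hGinvsym q p,
        real_inner_comm p (X q), real_inner_comm q (X p),
        real_inner_comm p (Ginv q), real_inner_comm q (Ginv p)]
    have hpar : ∀ p q : H,
        ⟪Ginv (p + q), p + q⟫ + ⟪Ginv (p - q), p - q⟫
          = 2 * ⟪Ginv p, p⟫ + 2 * ⟪Ginv q, q⟫ := by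
      intro p q
      simp only [map_add, map_sub, inner_add_left, inner_add_right, inner_sub_left,
        inner_sub_right]
      ring
    have hpolar0 : ∀ p q : H,
        4 * ⟪X p - Ginv p, q⟫ ≤ 2 * m * ⟪Ginv p, p⟫ + 2 * m * ⟪Ginv q, q⟫ := by
      intro p q
      have h1 := (abs_le.mp (hform' (p + q))).2
      have h2 := (abs_le.mp (hform' (p - q))).1
      have h3 := hpol_id p q
      have h4 : m * ⟪Ginv (p + q), p + q⟫ + m * ⟪Ginv (p - q), p - q⟫
          = 2 * m * ⟪Ginv p, p⟫ + 2 * m * ⟪Ginv q, q⟫ := by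
        linear_combination m * hpar p q
      nlinarith [h1, h2, h3, h4]
    have hGinvnonneg : ∀ w : H, 0 ≤ ⟪Ginv w, w⟫ := by
      intro w; by_cases hw : w = 0
      · simp [hw]
      · exact (hGinvpos w hw).le
    have hpolar : ∀ p q : H,
        2 * ⟪X p - Ginv p, q⟫ ≤ m ^ 2 * ⟪Ginv p, p⟫ + ⟪Ginv q, q⟫ := by
      intro p q
      rcases eq_or_lt_of_le hm0 with hm' | hm'
      · have h := hpolar0 p q
        have hq := hGinvnonneg q
        nlinarith [h, hq, hGinvnonneg p]
      · set s : ℝ := Real.sqrt m with hsdef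
        have e1 : s * s = m := Real.mul_self_sqrt hm0
        have hs0 : 0 < s := Real.sqrt_pos.mpr hm'
        have ip1 : ⟪X (s • p) - Ginv (s • p), s⁻¹ • q⟫ = ⟪X p - Ginv p, q⟫ := by
          rw [map_smul, map_smul, ← smul_sub, real_inner_smul_left, real_inner_smul_right,
            ← mul_assoc, mul_inv_cancel₀ hs0.ne', one_mul]
        have ip2 : ⟪Ginv (s • p), s • p⟫ = m * ⟪Ginv p, p⟫ := by
          rw [map_smul, real_inner_smul_left, real_inner_smul_right, ← mul_assoc, e1]
        have ip3 : ⟪Ginv (s⁻¹ • q), s⁻¹ • q⟫ = m⁻¹ * ⟪Ginv q, q⟫ := by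
          rw [map_smul, real_inner_smul_left, real_inner_smul_right, ← mul_assoc,
            ← mul_inv, e1]
        have h := hpolar0 (s • p) (s⁻¹ • q)
        rw [ip1, ip2, ip3] at h
        have e5 : 2 * m * (m⁻¹ * ⟪Ginv q, q⟫) = 2 * ⟪Ginv q, q⟫ := by
          field_simp
        rw [e5] at h
        linarith [h]
    -- bound on the G-form of the defect
    have hqbound : ⟪G (X u - Ginv u), X u - Ginv u⟫ ≤ m ^ 2 * ⟪Ginv u, u⟫ := by
      have h := hpolar u (G (X u - Ginv u))
      rw [hGG'] at h
      have hcm : ⟪X u - Ginv u, G (X u - Ginv u)⟫ = ⟪G (X u - Ginv u), X u - Ginv u⟫ :=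
        real_inner_comm _ _
      linarith [h, hcm.symm.le, hcm.le]
    have hq0 : 0 ≤ ⟪G (X u - Ginv u), X u - Ginv u⟫ := hGnonneg _
    have gpos := hGinvpos u hu
    have hNu := hNform u
    have hkc := key_ineq hc0 hc.le
    constructor
    · have hle : Real.exp (-(2 * c ^ 2)) ≤ 1 - m ^ 2 := by
        simp only [hm]; linarith [hkc]
      have := mul_le_mul_of_nonneg_right hle gpos.le
      nlinarith [hqbound, this, hNu]
    · rw [hNu]; linarith [hq0]
  refine ⟨⟨hNsa, fun u hu => ?_⟩, fun u hu => ?_⟩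
  · have h1 := (hkey u hu).1
    have gpos := hGinvpos u hu
    have h2 : 0 < Real.exp (-(2 * c ^ 2)) * ⟪Ginv u, u⟫ :=
      mul_pos (Real.exp_pos _) gpos
    linarith
  · obtain ⟨hlo, hhi⟩ := hkey u hu
    have gpos := hGinvpos u hu
    have npos : 0 < ⟪N u, u⟫ :=
      lt_of_lt_of_le (mul_pos (Real.exp_pos _) gpos) hlo
    rw [abs_le]
    constructor
    · have hlog : Real.log (Real.exp (-(2 * c ^ 2)) * ⟪Ginv u, u⟫) ≤ Real.log ⟪N u, u⟫ :=
        (Real.log_le_log_iff (mul_pos (Real.exp_pos _) gpos) npos).mpr hlo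
      rw [Real.log_mul (Real.exp_ne_zero _) (ne_of_gt gpos), Real.log_exp] at hlog
      linarith
    · have hlog : Real.log ⟪N u, u⟫ ≤ Real.log ⟪Ginv u, u⟫ :=
        (Real.log_le_log_iff npos gpos).mpr hhi
      have h2 : (0 : ℝ) ≤ 2 * c ^ 2 := by positivity
      linarith
end

section
/- Let V be a closed subspace of a real Hilbert space H, ι : V →L[ℝ] H the inclusion, π : H →L[ℝ] V the orthogonal projection, and β > 0. If G : V →L[ℝ] V is positive definite, then the two-level preconditioner T = ι ∘ G ∘ π + β • (1 − ι ∘ π) is positive definite on H: T is self-adjoint and ⟪T u, u⟫ > 0 for all u ≠ 0. In particular ⟪T u, u⟫ = ⟪G (π u), π u⟫ + β ‖u − ι (π u)‖². -/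
open scoped RealInnerProductSpace

/-- If `G` is positive definite on the coarse space `V`, then the two-level
preconditioner `T = ι G π + β (1 - ι π)` is positive definite on `H`,
with `⟪T u, u⟫ = ⟪G (π u), π u⟫ + β ‖u - ι (π u)‖²`. -/
theorem twolevel_preconditioner_posDef
    {H : Type*} [NormedAddCommGroup H] [InnerProductSpace ℝ H] [CompleteSpace H]
    (V : Submodule ℝ H) [CompleteSpace V]
    (β : ℝ) (hβ : 0 < β)
    (G : V →L[ℝ] V)
    (hGsa : IsSelfAdjoint G) (hGpos : ∀ v : V, v ≠ 0 → 0 < ⟪G v, v⟫)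
    (T : H →L[ℝ] H)
    (hT : T = V.subtypeL.comp (G.comp V.orthogonalProjectionOnto) +
      β • (1 - V.subtypeL.comp V.orthogonalProjectionOnto)) :
    IsSelfAdjoint T ∧ (∀ u : H, u ≠ 0 → 0 < ⟪T u, u⟫) ∧
      ∀ u : H, ⟪T u, u⟫ =
        ⟪G (V.orthogonalProjectionOnto u), V.orthogonalProjectionOnto u⟫ +
          β * ‖u - V.subtypeL (V.orthogonalProjectionOnto u)‖ ^ 2 := by
  have key : ∀ u : H, ⟪T u, u⟫ =
      ⟪G (V.orthogonalProjectionOnto u), V.orthogonalProjectionOnto u⟫ +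
        β * ‖u - V.subtypeL (V.orthogonalProjectionOnto u)‖ ^ 2 := by
    intro u
    set p : H := V.subtypeL (V.orthogonalProjectionOnto u) with hp
    have hTu : T u = V.subtypeL (G (V.orthogonalProjectionOnto u)) + β • (u - p) := by
      simp [hT, hp]
    have hw : u - p ∈ Vᗮ := Submodule.sub_starProjection_mem_orthogonal (K := V) u
    have h1 : ⟪V.subtypeL (G (V.orthogonalProjectionOnto u)), u⟫ =
        ⟪G (V.orthogonalProjectionOnto u), V.orthogonalProjectionOnto u⟫ := by
      rw [Submodule.subtypeL_apply, ← Submodule.inner_orthogonalProjectionOnto_eq_of_mem_left]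
    have h2 : ⟪u - p, u⟫ = ‖u - p‖ ^ 2 := by
      have h0 : ⟪u - p, p⟫ = 0 := by
        rw [real_inner_comm]; exact hw p (Submodule.coe_mem _)
      rw [← real_inner_self_eq_norm_sq]
      calc ⟪u - p, u⟫ = ⟪u - p, (u - p) + p⟫ := by congr 1; abel
        _ = ⟪u - p, u - p⟫ := by rw [inner_add_right, h0, add_zero]
    rw [hTu, inner_add_left, inner_smul_left, h1, h2]
    simp
  refine ⟨?_, ?_, key⟩
  · rw [hT]
    have h1 : IsSelfAdjoint (V.subtypeL.comp (G.comp V.orthogonalProjectionOnto)) := by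
      rw [IsSelfAdjoint, ContinuousLinearMap.star_eq_adjoint,
        ← ContinuousLinearMap.comp_assoc, ContinuousLinearMap.adjoint_comp,
        ContinuousLinearMap.adjoint_comp, Submodule.adjoint_subtypeL,
        Submodule.adjoint_orthogonalProjectionOnto, hGsa.adjoint_eq,
        ContinuousLinearMap.comp_assoc]
    have h2 : IsSelfAdjoint (1 - V.subtypeL.comp V.orthogonalProjectionOnto) := by
      rw [IsSelfAdjoint, star_sub, star_one,
        (show IsSelfAdjoint (V.subtypeL.comp V.orthogonalProjectionOnto) from
          isSelfAdjoint_starProjection V).star_eq]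
    exact h1.add ((IsSelfAdjoint.all β).smul h2)
  · intro u hu
    rw [key u]
    rcases eq_or_ne (V.orthogonalProjectionOnto u) 0 with hpu | hpu
    · have hne : u - V.subtypeL (V.orthogonalProjectionOnto u) ≠ 0 := by
        simpa [hpu] using hu
      have : 0 < ‖u - V.subtypeL (V.orthogonalProjectionOnto u)‖ ^ 2 := by
        have := norm_pos_iff.mpr hne; positivity
      have hG0 : ⟪G (V.orthogonalProjectionOnto u), V.orthogonalProjectionOnto u⟫ = 0 := by
        simp [hpu]
      nlinarith
    · have h1 := hGpos _ hpu
      have h2 : 0 ≤ β * ‖u - V.subtypeL (V.orthogonalProjectionOnto u)‖ ^ 2 := by positivity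
      linarith
end

section
/- Let H_U and H_Y be real Hilbert spaces, V_U ⊆ H_U and V_Y ⊆ H_Y closed subspaces with inclusions ι_U : V_U →L[ℝ] H_U and ι_Y : V_Y →L[ℝ] H_Y, and let π : H_U →L[ℝ] V_U be the orthogonal projection. Let K : H_U →L[ℝ] H_Y and K' : V_U →L[ℝ] V_Y with ‖K‖ ≤ C and ‖K'‖ ≤ C, and suppose a ≥ 0 satisfies ‖K − ι_Y ∘ K' ∘ π‖ ≤ a. For β > 0 set G = K† ∘ K + β • 1 on H_U, G' = (K')† ∘ K' + β • 1 on V_U, and V_op = ι_U ∘ G' ∘ π + β • (1 − ι_U ∘ π). Then for every u ∈ H_U, |⟪(G − V_op) u, u⟫| ≤ 2 C a ‖u‖², and consequently ‖G − V_op‖ ≤ 2 C a. -/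
open scoped RealInnerProductSpace

set_option maxHeartbeats 1000000

open ContinuousLinearMap in
lemma sym_opNorm_le {E : Type*} [NormedAddCommGroup E] [InnerProductSpace ℝ E]
    (T : E →L[ℝ] E) (hsym : ∀ x y : E, ⟪T x, y⟫ = ⟪x, T y⟫) {M : ℝ} (hM : 0 ≤ M)
    (h : ∀ u : E, |⟪T u, u⟫| ≤ M * ‖u‖ ^ 2) : ‖T‖ ≤ M := by
  have key : ∀ x y : E, |⟪T x, y⟫| ≤ M / 2 * (‖x‖ ^ 2 + ‖y‖ ^ 2) := by
    intro x y
    have pol : ⟪T x, y⟫ = (⟪T (x + y), x + y⟫ - ⟪T (x - y), x - y⟫) / 4 := by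
      have h1 : ⟪T y, x⟫ = ⟪T x, y⟫ := by rw [hsym y x, real_inner_comm]
      simp only [map_add, map_sub, inner_add_left, inner_add_right, inner_sub_left,
        inner_sub_right]
      linarith
    have h1 := h (x + y)
    have h2 := h (x - y)
    have e1 := norm_add_sq_real x y
    have e2 := norm_sub_sq_real x y
    rw [pol]
    rw [abs_div, abs_of_nonneg (by norm_num : (0:ℝ) ≤ 4)]
    have := abs_sub (⟪T (x + y), x + y⟫) (⟪T (x - y), x - y⟫)
    have hb : |⟪T (x + y), x + y⟫ - ⟪T (x - y), x - y⟫| ≤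
        |⟪T (x + y), x + y⟫| + |⟪T (x - y), x - y⟫| := abs_sub _ _
    nlinarith [abs_nonneg (⟪T (x + y), x + y⟫)]
  refine T.opNorm_le_bound hM fun x => ?_
  by_cases hx : T x = 0
  · simp only [hx, norm_zero]
    positivity
  · have hTx : 0 < ‖T x‖ := norm_pos_iff.2 hx
    have := key x ((‖x‖ / ‖T x‖) • T x)
    rw [real_inner_smul_right, real_inner_self_eq_norm_sq, norm_smul, Real.norm_eq_abs,
      abs_div, abs_of_nonneg (norm_nonneg x), abs_of_nonneg (norm_nonneg (T x))] at this
    have hx2 : |‖x‖ / ‖T x‖ * ‖T x‖ ^ 2| = ‖x‖ * ‖T x‖ := by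
      rw [abs_of_nonneg (by positivity)]
      field_simp
    rw [hx2] at this
    have h2 : (‖x‖ / ‖T x‖ * ‖T x‖) ^ 2 = ‖x‖ ^ 2 := by
      field_simp
    rw [h2] at this
    have hx0 : 0 < ‖x‖ := by
      rw [norm_pos_iff]
      intro h0
      exact hx (by simp [h0])
    nlinarith
open ContinuousLinearMap

open ContinuousLinearMap in
/-- Two-level approximation of the reduced Hessian: if `‖K‖, ‖K'‖ ≤ C` and
`‖K - ι_Y K' π‖ ≤ a`, then the reduced Hessian `G = K†K + β` and the two-level
operator `V_op = ι_U G' π + β (1 - ι_U π)` satisfy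
`|⟪(G - V_op) u, u⟫| ≤ 2 C a ‖u‖²` and `‖G - V_op‖ ≤ 2 C a`. -/
theorem twolevel_hessian_approximation
    {HU HY : Type*} [NormedAddCommGroup HU] [InnerProductSpace ℝ HU] [CompleteSpace HU]
    [NormedAddCommGroup HY] [InnerProductSpace ℝ HY] [CompleteSpace HY]
    (VU : Submodule ℝ HU) [CompleteSpace VU]
    (VY : Submodule ℝ HY) [CompleteSpace VY]
    (K : HU →L[ℝ] HY) (K' : VU →L[ℝ] VY) (C a : ℝ)
    (hKC : ‖K‖ ≤ C) (hK'C : ‖K'‖ ≤ C) (ha0 : 0 ≤ a)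
    (ha : ‖K - VY.subtypeL.comp (K'.comp VU.orthogonalProjection)‖ ≤ a)
    (β : ℝ) (hβ : 0 < β)
    (G : HU →L[ℝ] HU)
    (hG : G = (ContinuousLinearMap.adjoint K).comp K + β • 1)
    (G' : VU →L[ℝ] VU)
    (hG' : G' = (ContinuousLinearMap.adjoint K').comp K' + β • 1)
    (Vop : HU →L[ℝ] HU)
    (hVop : Vop = VU.subtypeL.comp (G'.comp VU.orthogonalProjection) +
      β • (1 - VU.subtypeL.comp VU.orthogonalProjection)) :
    (∀ u : HU, |⟪(G - Vop) u, u⟫| ≤ 2 * C * a * ‖u‖ ^ 2) ∧ ‖G - Vop‖ ≤ 2 * C * a := by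
  set B : HU →L[ℝ] HY := VY.subtypeL.comp (K'.comp VU.orthogonalProjection) with hB
  -- adjoint B ∘ B = ι (K'† K') π
  have hBB : (ContinuousLinearMap.adjoint B).comp B =
      VU.subtypeL.comp (((ContinuousLinearMap.adjoint K').comp K').comp
        VU.orthogonalProjection) := by
    rw [hB, adjoint_comp, adjoint_comp, Submodule.adjoint_subtypeL,
      Submodule.adjoint_orthogonalProjectionOnto]
    ext u
    simp [Submodule.orthogonalProjection_mem_subspace_eq_self]
  -- the key operator identity
  have hT : G - Vop = (ContinuousLinearMap.adjoint K).comp K -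
      (ContinuousLinearMap.adjoint B).comp B := by
    rw [hG, hVop, hG', hBB]
    ext u
    simp [smul_sub, sub_apply, add_apply, comp_apply, smul_apply]
  have hC0 : 0 ≤ C := le_trans (norm_nonneg K) hKC
  -- pointwise bounds
  have hKB : ∀ u : HU, ‖K u - B u‖ ≤ a * ‖u‖ := by
    intro u
    have := (K - B).le_opNorm u
    simpa [sub_apply] using this.trans (by gcongr)
  have hKu : ∀ u : HU, ‖K u‖ ≤ C * ‖u‖ := fun u =>
    (K.le_opNorm u).trans (by gcongr)
  have hBu : ∀ u : HU, ‖B u‖ ≤ C * ‖u‖ := by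
    intro u
    have h1 : ‖B u‖ = ‖K' (VU.orthogonalProjection u)‖ := by
      simp [hB]
    rw [h1]
    calc ‖K' (VU.orthogonalProjection u)‖ ≤ ‖K'‖ * ‖(VU.orthogonalProjection u : VU)‖ :=
          K'.le_opNorm _
      _ ≤ C * ‖u‖ := by
          have h2 : ‖(VU.orthogonalProjection u : VU)‖ ≤ ‖u‖ := by
            simpa using (VU.orthogonalProjection.le_opNorm u).trans
              (by nlinarith [Submodule.orthogonalProjection_norm_le VU, norm_nonneg u])
          exact mul_le_mul hK'C h2 (norm_nonneg _) hC0
  have hinner : ∀ u : HU, ⟪(G - Vop) u, u⟫ = ⟪K u, K u⟫ - ⟪B u, B u⟫ := by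
    intro u
    rw [hT]
    simp [sub_apply, comp_apply, inner_sub_left, adjoint_inner_left]
  have hbound : ∀ u : HU, |⟪(G - Vop) u, u⟫| ≤ 2 * C * a * ‖u‖ ^ 2 := by
    intro u
    rw [hinner u]
    have e : ⟪K u, K u⟫ - ⟪B u, B u⟫ = ⟪K u - B u, K u⟫ + ⟪B u, K u - B u⟫ := by
      simp only [inner_sub_left, inner_sub_right]
      ring
    rw [e]
    have h1 : |⟪K u - B u, K u⟫| ≤ ‖K u - B u‖ * ‖K u‖ := abs_real_inner_le_norm _ _
    have h2 : |⟪B u, K u - B u⟫| ≤ ‖B u‖ * ‖K u - B u‖ := abs_real_inner_le_norm _ _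
    have := abs_add_le (⟪K u - B u, K u⟫) (⟪B u, K u - B u⟫)
    nlinarith [hKB u, hKu u, hBu u, norm_nonneg (K u - B u), norm_nonneg (K u),
      norm_nonneg (B u), norm_nonneg u]
  refine ⟨hbound, ?_⟩
  have hsym : ∀ x y : HU, ⟪(G - Vop) x, y⟫ = ⟪x, (G - Vop) y⟫ := by
    intro x y
    rw [hT]
    simp [sub_apply, comp_apply, inner_sub_left, inner_sub_right,
      adjoint_inner_left, adjoint_inner_right]
  exact sym_opNorm_le _ hsym (by positivity) hbound
end

section
/- Let H_U, H_Y be real Hilbert spaces, V_U ⊆ H_U, V_Y ⊆ H_Y closed subspaces with inclusions ι_U, ι_Y and orthogonal projection π : H_U →L[ℝ] V_U. Let K : H_U →L[ℝ] H_Y, K' : V_U →L[ℝ] V_Y with ‖K‖ ≤ C, ‖K'‖ ≤ C and ‖K − ι_Y ∘ K' ∘ π‖ ≤ a; let β > 0 with 4 C a ≤ β and set b := 4 β⁻¹ C a. Let G = K† ∘ K + β • 1 with continuous inverse G⁻¹, and G' = (K')† ∘ K' + β • 1 with continuous inverse (G')⁻¹. Let W' : V_U →L[ℝ] V_U be positive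 definite with |Real.log ⟪W' v, v⟫ − Real.log ⟪(G')⁻¹ v, v⟫| ≤ d for all v ≠ 0, where d ≥ 0. Then for every u ∈ H_U with u ≠ 0, |Real.log ⟪E(W') u, u⟫ − Real.log ⟪G⁻¹ u, u⟫| ≤ d + b, where E(W') = ι_U ∘ W' ∘ π + β⁻¹ • (1 − ι_U ∘ π). -/
open scoped RealInnerProductSpace

section Aux

variable {E F : Type*} [NormedAddCommGroup E] [InnerProductSpace ℝ E] [CompleteSpace E]
  [NormedAddCommGroup F] [InnerProductSpace ℝ F] [CompleteSpace F]

lemma aux_qform (K : E →L[ℝ] F) (β : ℝ) (x y : E) :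
    ⟪((ContinuousLinearMap.adjoint K).comp K + β • (1 : E →L[ℝ] E)) x, y⟫
      = ⟪K x, K y⟫ + β * ⟪x, y⟫ := by
  simp [ContinuousLinearMap.adjoint_inner_left, inner_add_left, real_inner_smul_left]

lemma aux_pos (K : E →L[ℝ] F) {β : ℝ} (hβ : 0 < β) (x : E) (hx : x ≠ 0) :
    0 < ⟪((ContinuousLinearMap.adjoint K).comp K + β • (1 : E →L[ℝ] E)) x, x⟫ := by
  rw [aux_qform, real_inner_self_eq_norm_sq, real_inner_self_eq_norm_sq]
  have h1 : (0:ℝ) ≤ ‖K x‖ ^ 2 := sq_nonneg _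
  have h2 : (0:ℝ) < ‖x‖ ^ 2 := by
    have := norm_pos_iff.mpr hx
    positivity
  nlinarith

lemma aux_inv_pos (K : E →L[ℝ] F) {β : ℝ} (hβ : 0 < β) (Ainv : E →L[ℝ] E)
    (h1 : ∀ w, ((ContinuousLinearMap.adjoint K).comp K + β • (1 : E →L[ℝ] E)) (Ainv w) = w)
    (u : E) (hu : u ≠ 0) : 0 < ⟪Ainv u, u⟫ := by
  have hxne : Ainv u ≠ 0 := fun h0 => hu (by rw [← h1 u, h0, map_zero])
  have hp := aux_pos K hβ (Ainv u) hxne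
  rw [real_inner_comm]
  calc (0:ℝ) < ⟪((ContinuousLinearMap.adjoint K).comp K + β • (1 : E →L[ℝ] E)) (Ainv u),
      Ainv u⟫ := hp
    _ = ⟪u, Ainv u⟫ := by rw [h1 u, real_inner_comm]

lemma aux_var (K : E →L[ℝ] F) {β : ℝ} (hβ : 0 < β) (u x y : E)
    (hy : ((ContinuousLinearMap.adjoint K).comp K + β • (1 : E →L[ℝ] E)) y = u) :
    2 * ⟪u, x⟫ - ⟪((ContinuousLinearMap.adjoint K).comp K + β • (1 : E →L[ℝ] E)) x, x⟫
      ≤ ⟪y, u⟫ := by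
  have h1 : ⟪u, x⟫ = ⟪K y, K x⟫ + β * ⟪y, x⟫ := by
    rw [← hy]; exact aux_qform K β y x
  have h2 : ⟪y, u⟫ = ‖K y‖ ^ 2 + β * ‖y‖ ^ 2 := by
    rw [← hy, real_inner_comm, aux_qform, real_inner_self_eq_norm_sq,
      real_inner_self_eq_norm_sq]
  have h3 := aux_qform K β x x
  rw [real_inner_self_eq_norm_sq, real_inner_self_eq_norm_sq] at h3
  have h4 := norm_sub_sq_real (K y) (K x)
  have h5 := norm_sub_sq_real y x
  have h6 : (0:ℝ) ≤ ‖K y - K x‖ ^ 2 := sq_nonneg _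
  have h7 : (0:ℝ) ≤ ‖y - x‖ ^ 2 := sq_nonneg _
  nlinarith

lemma aux_inv_le {E' : Type*} [NormedAddCommGroup E'] [InnerProductSpace ℝ E']
    {A B Ainv Binv : E' →L[ℝ] E'} {t : ℝ} (ht : 0 < t)
    (hvar : ∀ u x, 2 * ⟪u, x⟫ - ⟪A x, x⟫ ≤ ⟪Ainv u, u⟫)
    (hB : ∀ w, B (Binv w) = w)
    (hAB : ∀ x, ⟪A x, x⟫ ≤ t * ⟪B x, x⟫) (u : E') :
    ⟪Binv u, u⟫ ≤ t * ⟪Ainv u, u⟫ := by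
  have h := hvar u (t⁻¹ • Binv u)
  have h1 : ⟪u, t⁻¹ • Binv u⟫ = t⁻¹ * ⟪Binv u, u⟫ := by
    rw [real_inner_smul_right, real_inner_comm]
  have h2 : ⟪A (t⁻¹ • Binv u), t⁻¹ • Binv u⟫ = t⁻¹ * t⁻¹ * ⟪A (Binv u), Binv u⟫ := by
    rw [map_smul, real_inner_smul_left, real_inner_smul_right]; ring
  have h3 : ⟪A (Binv u), Binv u⟫ ≤ t * ⟪Binv u, u⟫ := by
    have := hAB (Binv u)
    rwa [hB, real_inner_comm (Binv u) u] at this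
  rw [h1, h2] at h
  have ht' : (0:ℝ) < t⁻¹ := inv_pos.mpr ht
  have hq : t⁻¹ * t⁻¹ * ⟪A (Binv u), Binv u⟫ ≤ t⁻¹ * ⟪Binv u, u⟫ := by
    have h4 := mul_le_mul_of_nonneg_left h3 (le_of_lt (mul_pos ht' ht'))
    have h5 : t⁻¹ * t⁻¹ * (t * ⟪Binv u, u⟫) = t⁻¹ * ⟪Binv u, u⟫ := by
      field_simp
    linarith
  have h6 : t⁻¹ * ⟪Binv u, u⟫ ≤ ⟪Ainv u, u⟫ := by linarith
  have h7 := mul_le_mul_of_nonneg_left h6 (le_of_lt ht)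
  have h8 : t * (t⁻¹ * ⟪Binv u, u⟫) = ⟪Binv u, u⟫ := by field_simp
  linarith

lemma aux_log_ratio {x y t : ℝ} (hx : 0 < x) (hy : 0 < y) (ht : 1 ≤ t)
    (h1 : x ≤ t * y) (h2 : y ≤ t * x) : |Real.log x - Real.log y| ≤ t - 1 := by
  have ht0 : (0:ℝ) < t := by linarith
  have hl : Real.log t ≤ t - 1 := Real.log_le_sub_one_of_pos ht0
  rw [abs_sub_le_iff]
  constructor
  · have := Real.log_le_log hx h1
    rw [Real.log_mul (ne_of_gt ht0) (ne_of_gt hy)] at this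
    linarith
  · have := Real.log_le_log hy h2
    rw [Real.log_mul (ne_of_gt ht0) (ne_of_gt hx)] at this
    linarith

lemma aux_log_shift {x y c d : ℝ} (hx : 0 < x) (hy : 0 < y) (hc : 0 ≤ c) (hd : 0 ≤ d)
    (h : |Real.log x - Real.log y| ≤ d) : |Real.log (x + c) - Real.log (y + c)| ≤ d := by
  have hed : (1:ℝ) ≤ Real.exp d := Real.one_le_exp hd
  rw [abs_sub_le_iff] at h ⊢
  have key : ∀ p q : ℝ, 0 < p → 0 < q → Real.log p - Real.log q ≤ d →
      Real.log (p + c) - Real.log (q + c) ≤ d := by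
    intro p q hp hq hpq
    have h1 : p ≤ Real.exp d * q := by
      have : Real.log p ≤ Real.log (Real.exp d * q) := by
        rw [Real.log_mul (ne_of_gt (Real.exp_pos d)) (ne_of_gt hq), Real.log_exp]
        linarith
      rwa [Real.log_le_log_iff hp (by positivity)] at this
    have h2 : p + c ≤ Real.exp d * (q + c) := by nlinarith
    have : Real.log (p + c) ≤ Real.log (Real.exp d * (q + c)) :=
      Real.log_le_log (by linarith) h2
    rw [Real.log_mul (ne_of_gt (Real.exp_pos d)) (by positivity), Real.log_exp] at this
    linarith
  exact ⟨key x y hx hy h.1, key y x hy hx h.2⟩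

end Aux

set_option maxHeartbeats 1000000 in
/-- Finest-level bound of the multilevel convergence proof:
`d_σ(E(W'), G⁻¹) ≤ d + b` (pointwise form), i.e. `d_0 ≤ d_1 + b_0`. -/
theorem multilevel_finest_level_bound
    {HU HY : Type*} [NormedAddCommGroup HU] [InnerProductSpace ℝ HU] [CompleteSpace HU]
    [NormedAddCommGroup HY] [InnerProductSpace ℝ HY] [CompleteSpace HY]
    (VU : Submodule ℝ HU) [CompleteSpace VU]
    (VY : Submodule ℝ HY) [CompleteSpace VY]
    (K : HU →L[ℝ] HY) (K' : VU →L[ℝ] VY) (C a : ℝ)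
    (hKC : ‖K‖ ≤ C) (hK'C : ‖K'‖ ≤ C) (ha0 : 0 ≤ a)
    (ha : ‖K - VY.subtypeL.comp (K'.comp VU.orthogonalProjectionOnto)‖ ≤ a)
    (β : ℝ) (hβ : 0 < β) (hβa : 4 * C * a ≤ β)
    (b : ℝ) (hb : b = 4 * β⁻¹ * C * a)
    (G Ginv : HU →L[ℝ] HU)
    (hG : G = (ContinuousLinearMap.adjoint K).comp K + β • 1)
    (hG1 : G.comp Ginv = 1) (hG2 : Ginv.comp G = 1)
    (G' G'inv : VU →L[ℝ] VU)
    (hG' : G' = (ContinuousLinearMap.adjoint K').comp K' + β • 1)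
    (hG'1 : G'.comp G'inv = 1) (hG'2 : G'inv.comp G' = 1)
    (W' : VU →L[ℝ] VU)
    (hW'sa : IsSelfAdjoint W') (hW'pos : ∀ v : VU, v ≠ 0 → 0 < ⟪W' v, v⟫)
    (d : ℝ) (hd0 : 0 ≤ d)
    (hW'd : ∀ v : VU, v ≠ 0 → |Real.log ⟪W' v, v⟫ - Real.log ⟪G'inv v, v⟫| ≤ d)
    (EW' : HU →L[ℝ] HU)
    (hEW' : EW' = VU.subtypeL.comp (W'.comp VU.orthogonalProjectionOnto) +
      β⁻¹ • (1 - VU.subtypeL.comp VU.orthogonalProjectionOnto)) :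
    ∀ u : HU, u ≠ 0 →
      |Real.log ⟪EW' u, u⟫ - Real.log ⟪Ginv u, u⟫| ≤ d + b := by
  intro u hu
  have hβ' : (0:ℝ) < β⁻¹ := inv_pos.mpr hβ
  have hC0 : (0:ℝ) ≤ C := le_trans (norm_nonneg K) hKC
  set Ktil : HU →L[ℝ] HY := VY.subtypeL.comp (K'.comp VU.orthogonalProjectionOnto) with hKtil
  set Gtil : HU →L[ℝ] HU :=
    (ContinuousLinearMap.adjoint Ktil).comp Ktil + β • 1 with hGtil
  set Fop : HU →L[ℝ] HU := VU.subtypeL.comp (G'inv.comp VU.orthogonalProjectionOnto) +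
      β⁻¹ • (1 - VU.subtypeL.comp VU.orthogonalProjectionOnto) with hFop
  -- function versions of inverse hypotheses
  have hGapp : ∀ w, G (Ginv w) = w := fun w => by
    have := DFunLike.congr_fun hG1 w; simpa using this
  have hG'app : ∀ w, G' (G'inv w) = w := fun w => by
    have := DFunLike.congr_fun hG'1 w; simpa using this
  -- the adjoint of Ktil, pointwise
  have hadj : ∀ y : HY, ContinuousLinearMap.adjoint Ktil y =
      VU.subtypeL ((ContinuousLinearMap.adjoint K') (VY.orthogonalProjectionOnto y)) := by
    intro y
    rw [hKtil, ContinuousLinearMap.adjoint_comp, ContinuousLinearMap.adjoint_comp,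
      Submodule.adjoint_subtypeL, Submodule.adjoint_orthogonalProjectionOnto]
    rfl
  -- Gtil ∘ Fop = id
  have hGF : ∀ w : HU, Gtil (Fop w) = w := by
    intro w
    set v : VU := VU.orthogonalProjectionOnto w with hv
    have hPF : VU.orthogonalProjectionOnto (Fop w) = G'inv v := by
      rw [hFop]
      simp [map_sub, map_smul, Submodule.orthogonalProjectionOnto_mem_subspace_eq_self, hv,
        Submodule.orthogonalProjectionOnto_starProjection_of_le (le_refl VU)]
    have hKF : Ktil (Fop w) = VY.subtypeL (K' (G'inv v)) := by
      rw [hKtil]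
      simp only [ContinuousLinearMap.comp_apply, hPF]
    have hG'v : (ContinuousLinearMap.adjoint K') (K' (G'inv v)) + β • (G'inv v) = v := by
      have h := hG'app v
      rw [hG'] at h
      simpa using h
    rw [hGtil]
    simp only [ContinuousLinearMap.add_apply, ContinuousLinearMap.comp_apply,
      ContinuousLinearMap.smul_apply, ContinuousLinearMap.one_apply]
    rw [hKF, hadj]
    simp only [Submodule.subtypeL_apply, Submodule.orthogonalProjectionOnto_mem_subspace_eq_self]
    have hFw : Fop w = (↑(G'inv v) : HU) + β⁻¹ • (w - ↑v) := by
      rw [hFop]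
      simp [hv]
    rw [hFw, smul_add, smul_smul, mul_inv_cancel₀ (ne_of_gt hβ), one_smul]
    have hcoe : (↑((ContinuousLinearMap.adjoint K') (K' (G'inv v))) : HU)
        + β • (↑(G'inv v) : HU) = (↑v : HU) := by
      rw [← Submodule.coe_smul, ← Submodule.coe_add, hG'v]
    rw [← add_assoc, hcoe]
    abel
  -- norm bounds
  have hKx : ∀ x : HU, ‖K x‖ ≤ C * ‖x‖ := fun x =>
    le_trans (K.le_opNorm x) (mul_le_mul_of_nonneg_right hKC (norm_nonneg x))
  have hPx : ∀ x : HU, ‖(VU.orthogonalProjectionOnto x : VU)‖ ≤ ‖x‖ := fun x => by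
    have h1 := VU.orthogonalProjectionOnto.le_opNorm x
    have h2 := Submodule.orthogonalProjectionOnto_norm_le VU
    nlinarith [norm_nonneg x]
  have hKtilx : ∀ x : HU, ‖Ktil x‖ ≤ C * ‖x‖ := by
    intro x
    rw [hKtil]
    simp only [ContinuousLinearMap.comp_apply, Submodule.subtypeL_apply]
    have h0 : ‖((K' (VU.orthogonalProjectionOnto x) : VY) : HY)‖
        = ‖K' (VU.orthogonalProjectionOnto x)‖ := rfl
    rw [h0]
    calc ‖K' (VU.orthogonalProjectionOnto x)‖
        ≤ ‖K'‖ * ‖(VU.orthogonalProjectionOnto x : VU)‖ := K'.le_opNorm _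
      _ ≤ C * ‖x‖ := by
          nlinarith [hPx x, norm_nonneg (VU.orthogonalProjectionOnto x : VU),
            norm_nonneg x, norm_nonneg K', hK'C]
  have hdiff : ∀ x : HU, ‖K x - Ktil x‖ ≤ a * ‖x‖ := by
    intro x
    have h1 := (K - Ktil).le_opNorm x
    rw [ContinuousLinearMap.sub_apply] at h1
    calc ‖K x - Ktil x‖ ≤ ‖K - Ktil‖ * ‖x‖ := h1
      _ ≤ a * ‖x‖ := mul_le_mul_of_nonneg_right (hKtil ▸ ha) (norm_nonneg x)
  -- quadratic forms
  have hqG : ∀ x : HU, ⟪G x, x⟫ = ‖K x‖ ^ 2 + β * ‖x‖ ^ 2 := by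
    intro x
    rw [hG, aux_qform, real_inner_self_eq_norm_sq, real_inner_self_eq_norm_sq]
  have hqGtil : ∀ x : HU, ⟪Gtil x, x⟫ = ‖Ktil x‖ ^ 2 + β * ‖x‖ ^ 2 := by
    intro x
    rw [hGtil, aux_qform, real_inner_self_eq_norm_sq, real_inner_self_eq_norm_sq]
  set t : ℝ := 1 + 2 * β⁻¹ * C * a with hts
  have htCa : (0:ℝ) ≤ β⁻¹ * C * a := by positivity
  have ht1 : (1:ℝ) ≤ t := by rw [hts]; linarith
  have ht0 : (0:ℝ) < t := by linarith
  have hsq : ∀ x : HU, ‖K x‖ ^ 2 ≤ ‖Ktil x‖ ^ 2 + 2 * C * a * ‖x‖ ^ 2 ∧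
      ‖Ktil x‖ ^ 2 ≤ ‖K x‖ ^ 2 + 2 * C * a * ‖x‖ ^ 2 := by
    intro x
    have h1 := hdiff x
    have h2 := hKx x
    have h3 := hKtilx x
    have h4 : ‖K x‖ ≤ ‖Ktil x‖ + a * ‖x‖ := by
      have := norm_sub_norm_le (K x) (Ktil x); linarith
    have h5 : ‖Ktil x‖ ≤ ‖K x‖ + a * ‖x‖ := by
      have h6 : ‖Ktil x - K x‖ = ‖K x - Ktil x‖ := norm_sub_rev _ _
      have := norm_sub_norm_le (Ktil x) (K x); linarith
    have hsum : ‖K x‖ + ‖Ktil x‖ ≤ 2 * C * ‖x‖ := by linarith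
    have han : (0:ℝ) ≤ a * ‖x‖ := mul_nonneg ha0 (norm_nonneg x)
    constructor <;>
      nlinarith [norm_nonneg (K x), norm_nonneg (Ktil x), norm_nonneg x, han, hsum, h4, h5]
  have hββ : β⁻¹ * β = 1 := inv_mul_cancel₀ (ne_of_gt hβ)
  have hcmp1 : ∀ x : HU, ⟪G x, x⟫ ≤ t * ⟪Gtil x, x⟫ := by
    intro x
    rw [hqG, hqGtil, hts]
    have hterm : 2 * β⁻¹ * C * a * (β * ‖x‖ ^ 2) = 2 * C * a * ‖x‖ ^ 2 := by
      field_simp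
    nlinarith [(hsq x).1, mul_nonneg (mul_nonneg (mul_nonneg hβ'.le hC0) ha0)
      (sq_nonneg ‖Ktil x‖), hterm]
  have hcmp2 : ∀ x : HU, ⟪Gtil x, x⟫ ≤ t * ⟪G x, x⟫ := by
    intro x
    rw [hqG, hqGtil, hts]
    have hterm : 2 * β⁻¹ * C * a * (β * ‖x‖ ^ 2) = 2 * C * a * ‖x‖ ^ 2 := by
      field_simp
    nlinarith [(hsq x).2, mul_nonneg (mul_nonneg (mul_nonneg hβ'.le hC0) ha0)
      (sq_nonneg ‖K x‖), hterm]
  -- variational inequalities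
  have hvarG : ∀ w x : HU, 2 * ⟪w, x⟫ - ⟪G x, x⟫ ≤ ⟪Ginv w, w⟫ := by
    intro w x
    rw [hG]
    exact aux_var K hβ w x (Ginv w) (by rw [← hG]; exact hGapp w)
  have hvarGtil : ∀ w x : HU, 2 * ⟪w, x⟫ - ⟪Gtil x, x⟫ ≤ ⟪Fop w, w⟫ := by
    intro w x
    rw [hGtil]
    exact aux_var Ktil hβ w x (Fop w) (by rw [← hGtil]; exact hGF w)
  have h2a : ⟪Fop u, u⟫ ≤ t * ⟪Ginv u, u⟫ := aux_inv_le ht0 hvarG hGF hcmp1 u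
  have h2b : ⟪Ginv u, u⟫ ≤ t * ⟪Fop u, u⟫ := aux_inv_le ht0 hvarGtil hGapp hcmp2 u
  have hGinvpos : 0 < ⟪Ginv u, u⟫ :=
    aux_inv_pos K hβ Ginv (fun w => by rw [← hG]; exact hGapp w) u hu
  have hFpos : 0 < ⟪Fop u, u⟫ :=
    aux_inv_pos Ktil hβ Fop (fun w => by rw [← hGtil]; exact hGF w) u hu
  have step2 : |Real.log ⟪Fop u, u⟫ - Real.log ⟪Ginv u, u⟫| ≤ t - 1 :=
    aux_log_ratio hFpos hGinvpos ht1 h2a h2b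
  -- quadratic values of the E-forms
  set v : VU := VU.orthogonalProjectionOnto u with hvu
  have qE : ∀ T : VU →L[ℝ] VU,
      ⟪(VU.subtypeL.comp (T.comp VU.orthogonalProjectionOnto) +
        β⁻¹ • (1 - VU.subtypeL.comp VU.orthogonalProjectionOnto)) u, u⟫
      = ⟪T v, v⟫ + β⁻¹ * ‖u - (↑v : HU)‖ ^ 2 := by
    intro T
    simp only [ContinuousLinearMap.add_apply, ContinuousLinearMap.comp_apply,
      ContinuousLinearMap.smul_apply, ContinuousLinearMap.sub_apply,
      ContinuousLinearMap.one_apply, Submodule.subtypeL_apply, ← hvu]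
    rw [inner_add_left, real_inner_smul_left]
    have e1 : ⟪((T v : VU) : HU), u⟫ = ⟪T v, v⟫ := by
      rw [hvu]
      exact (Submodule.inner_orthogonalProjectionOnto_eq_of_mem_left (K := VU) (T v) u).symm
    have h0 : ⟪u - ((v : VU) : HU), ((v : VU) : HU)⟫ = 0 := by
      rw [hvu]
      exact Submodule.starProjection_inner_eq_zero (K := VU) u _ (Submodule.coe_mem _)
    have e2 : ⟪u - ((v : VU) : HU), u⟫ = ‖u - ((v : VU) : HU)‖ ^ 2 := by
      have h1 : ⟪u - ((v : VU) : HU), u⟫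
          = ⟪u - ((v : VU) : HU), u - ((v : VU) : HU)⟫ + ⟪u - ((v : VU) : HU), ((v : VU) : HU)⟫ := by
        rw [← inner_add_right, sub_add_cancel]
      rw [h1, h0, add_zero, real_inner_self_eq_norm_sq]
    rw [e1, e2]
  have qEW : ⟪EW' u, u⟫ = ⟪W' v, v⟫ + β⁻¹ * ‖u - (↑v : HU)‖ ^ 2 := by
    rw [hEW']; exact qE W'
  have qF : ⟪Fop u, u⟫ = ⟪G'inv v, v⟫ + β⁻¹ * ‖u - (↑v : HU)‖ ^ 2 := by
    rw [hFop]; exact qE G'inv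
  have step1 : |Real.log ⟪EW' u, u⟫ - Real.log ⟪Fop u, u⟫| ≤ d := by
    rcases eq_or_ne v 0 with hv0 | hvne
    · rw [qEW, qF, hv0]
      simp [hd0]
    · have hG'invpos : 0 < ⟪G'inv v, v⟫ :=
        aux_inv_pos K' hβ G'inv (fun w => by rw [← hG']; exact hG'app w) v hvne
      rw [qEW, qF]
      exact aux_log_shift (hW'pos v hvne) hG'invpos (by positivity) hd0 (hW'd v hvne)
  have htb : t - 1 ≤ b := by
    rw [hb, hts]; linarith
  calc |Real.log ⟪EW' u, u⟫ - Real.log ⟪Ginv u, u⟫|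
      ≤ |Real.log ⟪EW' u, u⟫ - Real.log ⟪Fop u, u⟫|
        + |Real.log ⟪Fop u, u⟫ - Real.log ⟪Ginv u, u⟫| := abs_sub_le _ _ _
    _ ≤ d + b := by linarith
end

section
/- Let ℓ ≥ 2 be a natural number, let f be a real number with 0 < f ≤ 1, and let 𝕂 be a real number with 0 < 𝕂 ≤ min(0.1, f/8). Let d_0, d_1, …, d_{ℓ-1} and b_0, b_1, …, b_{ℓ-2} be nonnegative real numbers satisfying: d_{ℓ-1} = 0; d_j ≤ 2 (d_{j+1} + b_j)² for every j with 1 ≤ j ≤ ℓ−2; d_0 ≤ d_1 + b_0; and b_j ≤ 𝕂 f^{ℓ−1−j} for every j with 0 ≤ j ≤ ℓ−2. Then d_j ≤ ((1 − 4 𝕂 f⁻¹)/(4 (𝕂 f⁻¹)²)) · (𝕂 f^{ℓ−1−j})² for every j with 1 ≤ j ≤ ℓ−1, in particular d_j < (1/4) f^{2(ℓ−j)} for 1 ≤ j ≤ ℓ−1, and d_0 ≤ (1/4 + 𝕂) f^{ℓ−1}. -/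
private lemma key_step (f κ C u : ℝ) (hf : 0 < f) (hκ0 : 0 < κ) (hκ : κ ≤ 1/8)
    (hC : C = (1 - 4*κ)/(4*κ^2)) (hu : 0 ≤ u) (huκ : u ≤ κ * f) :
    2 * (C * u^2 + u * f)^2 ≤ C * (u * f)^2 := by
  have hC0 : 0 ≤ C := by rw [hC]; exact div_nonneg (by linarith) (by positivity)
  have h1 : C * κ + 1 = 1/(4*κ) := by rw [hC]; field_simp; ring
  have h2 : C * u + f ≤ f/(4*κ) := by
    have : C * u ≤ C * (κ * f) := mul_le_mul_of_nonneg_left huκ hC0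
    have h3 : C * (κ * f) + f = f / (4*κ) := by
      linear_combination f * h1
    linarith
  have h4 : 0 ≤ C * u + f := by positivity
  have h5 : (C * u + f)^2 ≤ (f/(4*κ))^2 := by nlinarith
  have h6 : 2 * (C * u^2 + u * f)^2 = 2 * u^2 * (C * u + f)^2 := by ring
  have h7 : 2 * u^2 * (C * u + f)^2 ≤ 2 * u^2 * (f/(4*κ))^2 := by nlinarith [sq_nonneg u]
  have h8 : 2 * u^2 * (f/(4*κ))^2 ≤ C * (u * f)^2 := by
    have hge : 1/(8*κ^2) ≤ C := by
      rw [hC]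
      rw [div_le_div_iff₀ (by positivity) (by positivity)]
      nlinarith
    have : 2 * u^2 * (f/(4*κ))^2 = (1/(8*κ^2)) * (u*f)^2 := by field_simp; ring
    rw [this]
    exact mul_le_mul_of_nonneg_right hge (by positivity)
  linarith

/-- Arithmetic induction at the core of the multilevel convergence theorem:
from `d_{ℓ-1} = 0`, `d_j ≤ 2 (d_{j+1} + b_j)²` (intermediate levels),
`d_0 ≤ d_1 + b_0` and `b_j ≤ 𝕂 f^{ℓ-1-j}` one deduces
`d_j ≤ ((1 - 4𝕂/f)/(4(𝕂/f)²)) (𝕂 f^{ℓ-1-j})²`, hence `d_j < (1/4) f^{2(ℓ-j)}`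
for `1 ≤ j ≤ ℓ-1`, and `d_0 ≤ (1/4 + 𝕂) f^{ℓ-1}`. -/
theorem multilevel_arithmetic_induction
    (ℓ : ℕ) (hℓ : 2 ≤ ℓ) (f 𝕂 : ℝ)
    (hf0 : 0 < f) (hf1 : f ≤ 1)
    (h𝕂0 : 0 < 𝕂) (h𝕂 : 𝕂 ≤ min 0.1 (f / 8))
    (d b : ℕ → ℝ)
    (hdnn : ∀ j, j ≤ ℓ - 1 → 0 ≤ d j)
    (hbnn : ∀ j, j ≤ ℓ - 2 → 0 ≤ b j)
    (htop : d (ℓ - 1) = 0)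
    (hrec : ∀ j, 1 ≤ j → j ≤ ℓ - 2 → d j ≤ 2 * (d (j + 1) + b j) ^ 2)
    (h0 : d 0 ≤ d 1 + b 0)
    (hb : ∀ j, j ≤ ℓ - 2 → b j ≤ 𝕂 * f ^ (ℓ - 1 - j)) :
    (∀ j, 1 ≤ j → j ≤ ℓ - 1 →
      d j ≤ (1 - 4 * (𝕂 * f⁻¹)) / (4 * (𝕂 * f⁻¹) ^ 2) * (𝕂 * f ^ (ℓ - 1 - j)) ^ 2) ∧
    (∀ j, 1 ≤ j → j ≤ ℓ - 1 → d j < 1 / 4 * f ^ (2 * (ℓ - j))) ∧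
    d 0 ≤ (1 / 4 + 𝕂) * f ^ (ℓ - 1) := by
  obtain ⟨m, rfl⟩ : ∃ m, ℓ = m + 2 := ⟨ℓ - 2, by omega⟩
  set κ := 𝕂 * f⁻¹ with hκdef
  have hκ0 : 0 < κ := by positivity
  have hκf : κ * f = 𝕂 := by rw [hκdef, mul_assoc, inv_mul_cancel₀ hf0.ne', mul_one]
  have hκ8 : κ ≤ 1/8 := by
    have h2 : 𝕂 ≤ f/8 := le_trans h𝕂 (min_le_right _ _)
    calc κ = 𝕂 * f⁻¹ := hκdef
      _ ≤ (f/8) * f⁻¹ := mul_le_mul_of_nonneg_right h2 (by positivity)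
      _ = 1/8 := by field_simp
  set C := (1 - 4*κ)/(4*κ^2) with hCdef
  have hC0 : 0 ≤ C := div_nonneg (by linarith) (by positivity)
  have hm1 : m + 2 - 1 = m + 1 := rfl
  have hm2 : m + 2 - 2 = m := rfl
  simp only [hm1, hm2] at hdnn hbnn htop hrec hb ⊢
  -- main downward induction
  have main : ∀ i, i ≤ m → d (m + 1 - i) ≤ C * (𝕂 * f ^ i) ^ 2 := by
    intro i
    induction i with
    | zero =>
      intro _
      simp only [Nat.sub_zero, htop, pow_zero, mul_one]
      exact mul_nonneg hC0 (by positivity)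
    | succ i ih =>
      intro hi
      have hIH := ih (by omega)
      have hj1 : 1 ≤ m - i := by omega
      have hrecj := hrec (m - i) hj1 (by omega)
      have hbj := hb (m - i) (by omega)
      have hsub : m + 1 - (m - i) = i + 1 := by omega
      rw [hsub] at hbj
      have hjj : m - i + 1 = m + 1 - i := by omega
      rw [hjj] at hrecj
      have hgoal : m + 1 - (i + 1) = m - i := by omega
      rw [hgoal]
      have hdnn' : 0 ≤ d (m + 1 - i) := hdnn _ (by omega)
      have hbnn' : 0 ≤ b (m - i) := hbnn _ (by omega)
      have hstep1 : d (m + 1 - i) + b (m - i) ≤ C * (𝕂 * f ^ i) ^ 2 + 𝕂 * f ^ (i + 1) :=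
        add_le_add hIH hbj
      have hstep2 : 2 * (d (m + 1 - i) + b (m - i)) ^ 2
          ≤ 2 * (C * (𝕂 * f ^ i) ^ 2 + 𝕂 * f ^ (i + 1)) ^ 2 := by
        have h0' : 0 ≤ d (m + 1 - i) + b (m - i) := by linarith
        nlinarith
      have hu : (0:ℝ) ≤ 𝕂 * f ^ i := by positivity
      have huκ : 𝕂 * f ^ i ≤ κ * f := by
        rw [hκf]
        nlinarith [pow_le_one₀ hf0.le hf1 (n := i)]
      have hkey := key_step f κ C (𝕂 * f ^ i) hf0 hκ0 hκ8 hCdef hu huκ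
      have heq1 : C * (𝕂 * f ^ i) ^ 2 + 𝕂 * f ^ (i + 1)
          = C * (𝕂 * f ^ i) ^ 2 + (𝕂 * f ^ i) * f := by ring
      have heq2 : (𝕂 * f ^ i) * f = 𝕂 * f ^ (i + 1) := by ring
      calc d (m - i) ≤ 2 * (d (m + 1 - i) + b (m - i)) ^ 2 := hrecj
        _ ≤ 2 * (C * (𝕂 * f ^ i) ^ 2 + (𝕂 * f ^ i) * f) ^ 2 := by rw [← heq1]; exact hstep2
        _ ≤ C * ((𝕂 * f ^ i) * f) ^ 2 := hkey
        _ = C * (𝕂 * f ^ (i + 1)) ^ 2 := by rw [heq2]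
  -- part 1
  have part1 : ∀ j, 1 ≤ j → j ≤ m + 1 → d j ≤ C * (𝕂 * f ^ (m + 1 - j)) ^ 2 := by
    intro j h1j hjm
    have := main (m + 1 - j) (by omega)
    have hjj : m + 1 - (m + 1 - j) = j := by omega
    rwa [hjj] at this
  -- rewrite C·(𝕂 f^i)² = (1-4κ)/4 · (f^{i+1})²
  have hCval : ∀ i : ℕ, C * (𝕂 * f ^ i) ^ 2 = (1 - 4*κ)/4 * (f ^ (i + 1)) ^ 2 := by
    intro i
    rw [hCdef, ← hκf]
    field_simp
    ring
  refine ⟨part1, ?_, ?_⟩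
  · intro j h1j hjm
    have hp := part1 j h1j hjm
    have hlt : C * (𝕂 * f ^ (m + 1 - j)) ^ 2 < 1/4 * f ^ (2 * (m + 2 - j)) := by
      rw [hCval]
      have hexp : m + 1 - j + 1 = m + 2 - j := by omega
      rw [hexp]
      have : f ^ (2 * (m + 2 - j)) = (f ^ (m + 2 - j)) ^ 2 := by
        rw [mul_comm, pow_mul]
      rw [this]
      have hpos : (0:ℝ) < (f ^ (m + 2 - j)) ^ 2 := by positivity
      nlinarith
    linarith
  · -- d 0 ≤ (1/4 + 𝕂) f^{m+1}
    have hd1 : d 1 ≤ C * (𝕂 * f ^ m) ^ 2 := by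
      have := part1 1 le_rfl (by omega)
      simpa using this
    have hb0 := hb 0 (by omega)
    simp only [Nat.sub_zero] at hb0
    have hCv := hCval m
    have hfle : (f ^ (m + 1)) ^ 2 ≤ f ^ (m + 1) := by
      have h2 : (f ^ (m+1)) ^ 2 = f ^ ((m+1)*2) := (pow_mul f (m+1) 2).symm
      rw [h2]
      exact pow_le_pow_of_le_one hf0.le hf1 (by omega)
    have hd1' : d 1 ≤ 1/4 * f ^ (m + 1) := by
      rw [hCv] at hd1
      have hfp : (0:ℝ) ≤ (f ^ (m + 1)) ^ 2 := by positivity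
      have h3 : (1 - 4*κ)/4 * (f ^ (m+1))^2 ≤ 1/4 * (f^(m+1))^2 :=
        mul_le_mul_of_nonneg_right (by linarith) hfp
      linarith [mul_le_mul_of_nonneg_left hfle (by norm_num : (0:ℝ) ≤ 1/4)]
    calc d 0 ≤ d 1 + b 0 := h0
      _ ≤ 1/4 * f ^ (m + 1) + 𝕂 * f ^ (m + 1) := add_le_add hd1' hb0
      _ = (1/4 + 𝕂) * f ^ (m + 1) := by ring
end
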